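/- Let n ≥ 1, let A⁰, A¹, A², M be n×n real matrices, let u₀, u₁ ∈ ℝⁿ and ν₀ ∈ ℝ with ν₀ ≠ 0. Assume: ker A⁰ is one-dimensional, spanned by u₀ ≠ 0; A¹u₀ + A⁰u₁ = 0; Mu₀ ∉ range A⁰; and A²u₀ + A¹u₁ ∉ range A⁰. Then the linear map T : ℝⁿ × ℝⁿ × ℝ × ℝ → ℝⁿ × ℝⁿ × ℝ × ℝ defined by T(w₀, w₁, c̃, ν̃) = (A⁰w₀ + c̃ν₀Mu₀ − ν̃A⁰u₁, A¹w₀ + A⁰w₁ + c̃(Mu₀ + ν₀Mu₁) + ν̃(2A²u₀ + A¹u₁), ⟨w₀, u₀⟩, ⟨w₁, u₀⟩) is injective, and hence bijective. -/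
import Mathlib


open Matrix

/-- Invertibility of the linearization of the double-root defining system: under the
simple-double-root hypotheses, the linear map
`T(w₀, w₁, c̃, ν̃) = (A⁰w₀ + c̃ν₀Mu₀ − ν̃A⁰u₁,
A¹w₀ + A⁰w₁ + c̃(Mu₀ + ν₀Mu₁) + ν̃(2A²u₀ + A¹u₁), ⟨w₀, u₀⟩, ⟨w₁, u₀⟩)`
is injective, hence bijective. -/
theorem stmt9 (n : ℕ) (hn : 1 ≤ n)
    (A0 A1 A2 M : Matrix (Fin n) (Fin n) ℝ)
    (u₀ u₁ : Fin n → ℝ) (ν₀ : ℝ) (hν₀ : ν₀ ≠ 0)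
    (hu₀ : u₀ ≠ 0)
    (hker : LinearMap.ker A0.mulVecLin = Submodule.span ℝ {u₀})
    (hchain : A1 *ᵥ u₀ + A0 *ᵥ u₁ = 0)
    (hM : M *ᵥ u₀ ∉ LinearMap.range A0.mulVecLin)
    (hA2 : A2 *ᵥ u₀ + A1 *ᵥ u₁ ∉ LinearMap.range A0.mulVecLin)
    (T : (Fin n → ℝ) × (Fin n → ℝ) × ℝ × ℝ → (Fin n → ℝ) × (Fin n → ℝ) × ℝ × ℝ)
    (hT : ∀ (w₀ w₁ : Fin n → ℝ) (ct νt : ℝ), T (w₀, w₁, ct, νt) =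
      (A0 *ᵥ w₀ + (ct * ν₀) • (M *ᵥ u₀) - νt • (A0 *ᵥ u₁),
       A1 *ᵥ w₀ + A0 *ᵥ w₁ + ct • (M *ᵥ u₀ + ν₀ • (M *ᵥ u₁))
         + νt • ((2 : ℝ) • (A2 *ᵥ u₀) + A1 *ᵥ u₁),
       w₀ ⬝ᵥ u₀, w₁ ⬝ᵥ u₀)) :
    Function.Injective T ∧ Function.Bijective T := by
  classical
  have hns : u₀ ⬝ᵥ u₀ ≠ 0 := fun h => hu₀ (dotProduct_self_eq_zero.mp h)
  -- central kernel computation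
  have key : ∀ (w₀ w₁ : Fin n → ℝ) (c ν : ℝ),
      A0 *ᵥ w₀ + (c * ν₀) • (M *ᵥ u₀) - ν • (A0 *ᵥ u₁) = 0 →
      A1 *ᵥ w₀ + A0 *ᵥ w₁ + c • (M *ᵥ u₀ + ν₀ • (M *ᵥ u₁))
        + ν • ((2 : ℝ) • (A2 *ᵥ u₀) + A1 *ᵥ u₁) = 0 →
      w₀ ⬝ᵥ u₀ = 0 → w₁ ⬝ᵥ u₀ = 0 → w₀ = 0 ∧ w₁ = 0 ∧ c = 0 ∧ ν = 0 := by
    intro w₀ w₁ c ν h1 h2 h3 h4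
    have hc : c = 0 := by
      by_contra hc0
      have hs : c * ν₀ ≠ 0 := mul_ne_zero hc0 hν₀
      apply hM
      refine ⟨(c * ν₀)⁻¹ • (ν • u₁ - w₀), ?_⟩
      have e : (c * ν₀) • (M *ᵥ u₀) = ν • (A0 *ᵥ u₁) - A0 *ᵥ w₀ := by
        linear_combination (norm := module) h1
      simp only [mulVecLin_apply, mulVec_smul, mulVec_sub]
      rw [← e, smul_smul, inv_mul_cancel₀ hs, one_smul]
    subst hc
    simp only [zero_mul, zero_smul, add_zero] at h1 h2
    have hk : w₀ - ν • u₁ ∈ LinearMap.ker A0.mulVecLin := by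
      simp only [LinearMap.mem_ker, mulVecLin_apply, mulVec_sub, mulVec_smul]
      linear_combination (norm := module) h1
    rw [hker] at hk
    obtain ⟨α, hα⟩ := Submodule.mem_span_singleton.mp hk
    have hA1α : α • (A1 *ᵥ u₀) = A1 *ᵥ w₀ - ν • (A1 *ᵥ u₁) := by
      have := congrArg (A1 *ᵥ ·) hα
      simpa [mulVec_sub, mulVec_smul] using this
    have hνz : ν = 0 := by
      by_contra hν
      have hs : (2 : ℝ) * ν ≠ 0 := mul_ne_zero two_ne_zero hν
      apply hA2
      refine ⟨(2 * ν)⁻¹ • (α • u₁ - w₁), ?_⟩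
      have e : (2 * ν) • (A2 *ᵥ u₀ + A1 *ᵥ u₁) = α • (A0 *ᵥ u₁) - A0 *ᵥ w₁ := by
        linear_combination (norm := module) h2 + hA1α - α • hchain
      simp only [mulVecLin_apply, mulVec_smul, mulVec_sub]
      rw [← e, smul_smul, inv_mul_cancel₀ hs, one_smul]
    subst hνz
    simp only [zero_smul, sub_zero] at hα
    have hα0 : α = 0 := by
      have h := h3
      rw [← hα, smul_dotProduct, smul_eq_mul] at h
      exact (mul_eq_zero.mp h).resolve_right hns
    have hw₀ : w₀ = 0 := by rw [← hα, hα0, zero_smul]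
    simp only [hw₀, mulVec_zero, zero_add, zero_smul, add_zero] at h2
    have hk1 : w₁ ∈ LinearMap.ker A0.mulVecLin := by
      simpa [LinearMap.mem_ker, mulVecLin_apply] using h2
    rw [hker] at hk1
    obtain ⟨β, hβ⟩ := Submodule.mem_span_singleton.mp hk1
    have hβ0 : β = 0 := by
      have h := h4
      rw [← hβ, smul_dotProduct, smul_eq_mul] at h
      exact (mul_eq_zero.mp h).resolve_right hns
    exact ⟨hw₀, by rw [← hβ, hβ0, zero_smul], rfl, rfl⟩
  have hinj : Function.Injective T := by
    rintro ⟨a₀, a₁, ac, aν⟩ ⟨b₀, b₁, bc, bν⟩ hab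
    rw [hT, hT] at hab
    simp only [Prod.mk.injEq] at hab
    obtain ⟨e1, e2, e3, e4⟩ := hab
    obtain ⟨z0, z1, z2, z3⟩ := key (a₀ - b₀) (a₁ - b₁) (ac - bc) (aν - bν)
      (by rw [mulVec_sub]; linear_combination (norm := module) e1)
      (by rw [mulVec_sub, mulVec_sub]; linear_combination (norm := module) e2)
      (by rw [sub_dotProduct, e3, sub_self])
      (by rw [sub_dotProduct, e4, sub_self])
    simp only [Prod.mk.injEq]
    exact ⟨sub_eq_zero.mp z0, sub_eq_zero.mp z1, sub_eq_zero.mp z2, sub_eq_zero.mp z3⟩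
  refine ⟨hinj, hinj, ?_⟩
  -- surjectivity: T agrees with a linear endomorphism of a finite-dimensional space
  set f : ((Fin n → ℝ) × (Fin n → ℝ) × ℝ × ℝ) → ((Fin n → ℝ) × (Fin n → ℝ) × ℝ × ℝ) :=
    fun p =>
      (A0 *ᵥ p.1 + (p.2.2.1 * ν₀) • (M *ᵥ u₀) - p.2.2.2 • (A0 *ᵥ u₁),
       A1 *ᵥ p.1 + A0 *ᵥ p.2.1 + p.2.2.1 • (M *ᵥ u₀ + ν₀ • (M *ᵥ u₁))
         + p.2.2.2 • ((2 : ℝ) • (A2 *ᵥ u₀) + A1 *ᵥ u₁),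
       p.1 ⬝ᵥ u₀, p.2.1 ⬝ᵥ u₀) with hf_def
  have hTeq : T = f := by
    funext p
    obtain ⟨w₀, w₁, c, ν⟩ := p
    exact hT w₀ w₁ c ν
  have hlin : IsLinearMap ℝ f := by
    constructor
    · rintro ⟨a₀, a₁, ac, aν⟩ ⟨b₀, b₁, bc, bν⟩
      simp only [hf_def, Prod.mk_add_mk, Prod.mk.injEq, mulVec_add, add_dotProduct]
      exact ⟨by module, by module, trivial⟩
    · rintro r ⟨a₀, a₁, ac, aν⟩
      simp only [hf_def, Prod.smul_mk, Prod.mk.injEq, mulVec_smul, smul_dotProduct,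
        smul_eq_mul]
      exact ⟨by module, by module, trivial⟩
  have hTLeq : T = ⇑(hlin.mk' f) := hTeq
  rw [hTLeq]
  exact LinearMap.surjective_of_injective (hTLeq ▸ hinj)
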